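/- Let A_1, A_2, B_1, B_2 be Hermitian operators on a Hilbert space satisfying A_j² = I, B_k² = I, and [A_j, B_k] = 0 for all j, k ∈ {1,2}. Then the CHSH Bell operator B = A_1B_1 + A_1B_2 + A_2B_1 − A_2B_2 satisfies B ≤ 2√2 · I (as operators). -/

import Mathlib

open ContinuousLinearMap in
private lemma chsh_smul_isPositive {H : Type*} [NormedAddCommGroup H]
    [InnerProductSpace ℂ H] [CompleteSpace H] {c : ℝ} (hc : 0 ≤ c)
    {T : H →L[ℂ] H} (hT : T.IsPositive) : (((c : ℂ)) • T).IsPositive := by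
  constructor
  · have : star ((c:ℂ) • T) = (c:ℂ) • T := by
      rw [star_smul, Complex.star_def, Complex.conj_ofReal, hT.isSelfAdjoint.star_eq]
    exact isSelfAdjoint_iff_isSymmetric.mp this
  · intro x
    have h2 := hT.2 x
    have : ((c:ℂ) • T).reApplyInnerSelf x = c * T.reApplyInnerSelf x := by
      simp only [reApplyInnerSelf, smul_apply]
      rw [inner_smul_left, Complex.conj_ofReal]; simp [RCLike.re_to_complex,
        Complex.re_ofReal_mul]
    rw [this]
    exact mul_nonneg hc h2

open ContinuousLinearMap in
private lemma chsh_sq_isPositive {H : Type*} [NormedAddCommGroup H]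
    [InnerProductSpace ℂ H] [CompleteSpace H]
    {P : H →L[ℂ] H} (hP : IsSelfAdjoint P) : (P * P).IsPositive := by
  have := (isPositive_one (E := H) (𝕜 := ℂ)).conj_adjoint P
  simpa [hP.adjoint_eq, mul_def, one_def, comp_id] using this

/-- CHSH/Tsirelson bound: for Hermitian involutions `A₁,A₂,B₁,B₂` with each `Aⱼ`
commuting with each `Bₖ`, the CHSH Bell operator is at most `2√2 · I`. -/
theorem chsh_operator_bound {H : Type*} [NormedAddCommGroup H]
    [InnerProductSpace ℂ H] [CompleteSpace H]
    (A B : Fin 2 → H →L[ℂ] H)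
    (hA : ∀ j, IsSelfAdjoint (A j)) (hB : ∀ k, IsSelfAdjoint (B k))
    (hA2 : ∀ j, A j * A j = 1) (hB2 : ∀ k, B k * B k = 1)
    (hcomm : ∀ j k, A j * B k = B k * A j) :
    (((2 * Real.sqrt 2 : ℝ) : ℂ) • (1 : H →L[ℂ] H)
      - (A 0 * B 0 + A 0 * B 1 + A 1 * B 0 - A 1 * B 1)).IsPositive := by
  have hs : Real.sqrt 2 * Real.sqrt 2 = 2 := Real.mul_self_sqrt (by norm_num)
  have key : (((2 * Real.sqrt 2 : ℝ) : ℂ) • (1 : H →L[ℂ] H)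
      - (A 0 * B 0 + A 0 * B 1 + A 1 * B 0 - A 1 * B 1)) =
    (((Real.sqrt 2)⁻¹ : ℝ) : ℂ) •
      (((((Real.sqrt 2)⁻¹ : ℝ) : ℂ) • (A 1 + A 0) - B 0) *
        ((((Real.sqrt 2)⁻¹ : ℝ) : ℂ) • (A 1 + A 0) - B 0)
      + ((((Real.sqrt 2)⁻¹ : ℝ) : ℂ) • (A 1 - A 0) + B 1) *
        ((((Real.sqrt 2)⁻¹ : ℝ) : ℂ) • (A 1 - A 0) + B 1)) := by
    set z : ℂ := (((Real.sqrt 2)⁻¹ : ℝ) : ℂ) with hzdef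
    have hz2 : z * z = 1/2 := by
      rw [hzdef]; norm_cast
      rw [← mul_inv, hs]; norm_num
    have hc : ((2 * Real.sqrt 2 : ℝ) : ℂ) = 4 * z := by
      rw [hzdef]; norm_cast
      rw [inv_eq_one_div, mul_comm (4:ℝ), div_mul_eq_mul_div, eq_div_iff (by positivity)]
      nlinarith [hs]
    clear_value z
    clear hzdef
    rw [hc]
    simp only [mul_sub, sub_mul, mul_add, add_mul, smul_sub, smul_add, smul_smul,
      Algebra.mul_smul_comm, Algebra.smul_mul_assoc, hA2, hB2]
    simp only [← hcomm]
    match_scalars <;> first | ring1 | linear_combination (-4*z)*hz2 |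
      linear_combination (-2:ℂ)*hz2 | linear_combination (2:ℂ)*hz2
  rw [key]
  have hstar : star ((((Real.sqrt 2)⁻¹ : ℝ) : ℂ)) = (((Real.sqrt 2)⁻¹ : ℝ) : ℂ) := by
    rw [Complex.star_def, Complex.conj_ofReal]
  have hP : IsSelfAdjoint ((((Real.sqrt 2)⁻¹ : ℝ) : ℂ) • (A 1 + A 0) - B 0) := by
    have h1 : IsSelfAdjoint ((((Real.sqrt 2)⁻¹ : ℝ) : ℂ) • (A 1 + A 0)) := by
      rw [IsSelfAdjoint, star_smul, hstar, ((hA 1).add (hA 0)).star_eq]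
    exact h1.sub (hB 0)
  have hQ : IsSelfAdjoint ((((Real.sqrt 2)⁻¹ : ℝ) : ℂ) • (A 1 - A 0) + B 1) := by
    have h1 : IsSelfAdjoint ((((Real.sqrt 2)⁻¹ : ℝ) : ℂ) • (A 1 - A 0)) := by
      rw [IsSelfAdjoint, star_smul, hstar, ((hA 1).sub (hA 0)).star_eq]
    exact h1.add (hB 1)
  exact chsh_smul_isPositive (by positivity)
    ((chsh_sq_isPositive hP).add (chsh_sq_isPositive hQ))
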